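/- Let T̲ be a lower transition operator on a finite state space 𝒳. Then its coefficient of ergodicity β(T̲) := max{‖T̲f‖_v : 0 ≤ f ≤ 1} also equals max{‖T̲f‖_v : f ∈ ℒ(𝒳), max f = 1, min f = 0} and equals max{‖T̲f‖_c : f ∈ ℒ(𝒳), −1 ≤ f ≤ 1}, where ‖g‖_c = ‖g‖_v/2. -/

import Mathlib

open scoped BigOperators

variable {X : Type*} [Fintype X] [Nonempty X] [DecidableEq X]

/-- The maximum norm on real-valued functions on a finite state space. -/
noncomputable def maxNorm (f : X → ℝ) : ℝ := ⨆ x, |f x|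

/-- The variation seminorm `max f - min f`. -/
noncomputable def varNorm (f : X → ℝ) : ℝ := (⨆ x, f x) - (⨅ x, f x)

/-- The centred seminorm `(max f - min f)/2`. -/
noncomputable def centNorm (f : X → ℝ) : ℝ := ((⨆ x, f x) - (⨅ x, f x)) / 2

/-- Indicator function of the singleton `{x}`. -/
def indic (x : X) : X → ℝ := fun y => if y = x then 1 else 0

/-- A lower transition operator: dominates the minimum, is superadditive,
and is non-negatively homogeneous. -/
def IsLTO (T : (X → ℝ) → (X → ℝ)) : Prop :=
  (∀ f x, (⨅ y, f y) ≤ T f x) ∧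
  (∀ f g x, T f x + T g x ≤ T (f + g) x) ∧
  (∀ (μ : ℝ), 0 ≤ μ → ∀ f, T (μ • f) = μ • T f)

/-- A lower transition rate operator: vanishes on constants, is superadditive,
is non-negatively homogeneous, and is non-negative off the diagonal on indicators. -/
def IsLTRO (Q : (X → ℝ) → (X → ℝ)) : Prop :=
  (∀ γ : ℝ, Q (fun _ => γ) = 0) ∧
  (∀ f g x, Q f x + Q g x ≤ Q (f + g) x) ∧
  (∀ (μ : ℝ), 0 ≤ μ → ∀ f, Q (μ • f) = μ • Q f) ∧
  (∀ x y, x ≠ y → 0 ≤ Q (indic x) y)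

/-- Operator norm induced by the maximum norm. -/
noncomputable def opNorm (A : (X → ℝ) → (X → ℝ)) : ℝ :=
  sSup {r | ∃ f : X → ℝ, maxNorm f = 1 ∧ r = maxNorm (A f)}

/-- The (weak) coefficient of ergodicity. -/
noncomputable def coeffErg (A : (X → ℝ) → (X → ℝ)) : ℝ :=
  sSup {r | ∃ f : X → ℝ, (∀ x, 0 ≤ f x ∧ f x ≤ 1) ∧ r = varNorm (A f)}


section aux
variable {X : Type*} [Fintype X] [Nonempty X]

lemma aux_bddA (f : X → ℝ) : BddAbove (Set.range f) := (Set.finite_range f).bddAbove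
lemma aux_bddB (f : X → ℝ) : BddBelow (Set.range f) := (Set.finite_range f).bddBelow
lemma aux_le_sup (f : X → ℝ) (x : X) : f x ≤ ⨆ y, f y := le_ciSup (aux_bddA f) x
lemma aux_inf_le (f : X → ℝ) (x : X) : (⨅ y, f y) ≤ f x := ciInf_le (aux_bddB f) x

lemma aux_sup_add (f : X → ℝ) (c : ℝ) : (⨆ x, (f x + c)) = (⨆ x, f x) + c := by
  apply le_antisymm
  · exact ciSup_le fun x => add_le_add_left (aux_le_sup f x) c
  · have h : (⨆ x, f x) ≤ (⨆ x, (f x + c)) - c :=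
      ciSup_le fun x => le_sub_iff_add_le.mpr (aux_le_sup (fun x => f x + c) x)
    linarith

lemma aux_inf_add (f : X → ℝ) (c : ℝ) : (⨅ x, (f x + c)) = (⨅ x, f x) + c := by
  apply le_antisymm
  · have h : (⨅ x, (f x + c)) - c ≤ (⨅ x, f x) :=
      le_ciInf fun x => sub_le_iff_le_add.mpr (aux_inf_le (fun x => f x + c) x)
    linarith
  · exact le_ciInf fun x => add_le_add_left (aux_inf_le f x) c

lemma varNorm_nonneg (f : X → ℝ) : 0 ≤ varNorm f := by
  obtain ⟨x⟩ := ‹Nonempty X›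
  have := (aux_inf_le f x).trans (aux_le_sup f x)
  unfold varNorm; linarith

lemma varNorm_add_const (f : X → ℝ) (c : ℝ) : varNorm (f + fun _ => c) = varNorm f := by
  unfold varNorm
  simp only [Pi.add_apply]
  rw [aux_sup_add, aux_inf_add]; ring

lemma varNorm_smul {μ : ℝ} (hμ : 0 ≤ μ) (f : X → ℝ) : varNorm (μ • f) = μ * varNorm f := by
  unfold varNorm
  simp only [Pi.smul_apply, smul_eq_mul]
  rw [← Real.mul_iSup_of_nonneg hμ, ← Real.mul_iInf_of_nonneg hμ, mul_sub]

variable {T : (X → ℝ) → (X → ℝ)}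

lemma lto_zero (hT : IsLTO T) : T 0 = 0 := by
  have h := hT.2.2 0 le_rfl 0
  simpa using h

lemma lto_mono (hT : IsLTO T) {f g : X → ℝ} (h : ∀ x, f x ≤ g x) (x : X) : T f x ≤ T g x := by
  have h1 := hT.2.1 f (g - f) x
  have h2 : (0:ℝ) ≤ ⨅ y, (g - f) y := le_ciInf fun y => sub_nonneg.mpr (h y)
  have h3 := hT.1 (g - f) x
  have h4 : f + (g - f) = g := by funext y; simp
  rw [h4] at h1; linarith

lemma lto_add_const (hT : IsLTO T) (f : X → ℝ) (c : ℝ) (x : X) :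
    T (f + fun _ => c) x = T f x + c := by
  have h1 := hT.2.1 f (fun _ => c) x
  have h2 : c ≤ T (fun _ => c) x := by
    have := hT.1 (fun _ => c) x
    rwa [ciInf_const] at this
  have h3 := hT.2.1 (f + fun _ => c) (fun _ => -c) x
  have h4 : -c ≤ T (fun _ => -c) x := by
    have := hT.1 (fun _ => -c) x
    rwa [ciInf_const] at this
  have h5 : (f + fun _ => c) + (fun _ => -c) = f := by funext y; simp
  rw [h5] at h3; linarith

lemma lto_le_sup (hT : IsLTO T) (f : X → ℝ) (x : X) : T f x ≤ ⨆ y, f y := by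
  have h1 := lto_mono hT (f := f) (g := fun _ => ⨆ y, f y) (aux_le_sup f) x
  have h2 : T (fun _ => (⨆ y, f y)) x = ⨆ y, f y := by
    have h3 := lto_add_const hT 0 (⨆ y, f y) x
    rw [lto_zero hT] at h3
    simpa using h3
  linarith

lemma lto_var_le (hT : IsLTO T) (f : X → ℝ) : varNorm (T f) ≤ varNorm f :=
  sub_le_sub (ciSup_le fun x => lto_le_sup hT f x) (le_ciInf fun x => hT.1 f x)

lemma lto_var_shift (hT : IsLTO T) (f : X → ℝ) (c : ℝ) :
    varNorm (T (f + fun _ => c)) = varNorm (T f) := by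
  have h : T (f + fun _ => c) = T f + fun _ => c := by
    funext x; exact lto_add_const hT f c x
  rw [h, varNorm_add_const]

lemma lto_var_smul (hT : IsLTO T) {μ : ℝ} (hμ : 0 ≤ μ) (f : X → ℝ) :
    varNorm (T (μ • f)) = μ * varNorm (T f) := by
  rw [hT.2.2 μ hμ f, varNorm_smul hμ]

end aux

theorem stmt14 (T : (X → ℝ) → (X → ℝ)) (hT : IsLTO T) :
    coeffErg T =
      sSup {r | ∃ f : X → ℝ, (⨆ x, f x) = 1 ∧ (⨅ x, f x) = 0 ∧ r = varNorm (T f)} ∧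
    coeffErg T =
      sSup {r | ∃ f : X → ℝ, (∀ x, -1 ≤ f x ∧ f x ≤ 1) ∧ r = centNorm (T f)} := by
  obtain ⟨x0⟩ := ‹Nonempty X›
  set S0 : Set ℝ := {r | ∃ f : X → ℝ, (∀ x, 0 ≤ f x ∧ f x ≤ 1) ∧ r = varNorm (T f)} with hS0
  set S1 : Set ℝ := {r | ∃ f : X → ℝ, (⨆ x, f x) = 1 ∧ (⨅ x, f x) = 0 ∧ r = varNorm (T f)} with hS1
  set S2 : Set ℝ := {r | ∃ f : X → ℝ, (∀ x, -1 ≤ f x ∧ f x ≤ 1) ∧ r = centNorm (T f)} with hS2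
  have hcoeff : coeffErg T = sSup S0 := rfl
  -- bounds on elements
  have hS0ub : ∀ r ∈ S0, r ≤ 1 := by
    rintro r ⟨f, hf, rfl⟩
    have h1 : varNorm f ≤ 1 := by
      have hs : (⨆ x, f x) ≤ 1 := ciSup_le fun x => (hf x).2
      have hi : (0:ℝ) ≤ ⨅ x, f x := le_ciInf fun x => (hf x).1
      unfold varNorm; linarith
    exact (lto_var_le hT f).trans h1
  have hS1ub : ∀ r ∈ S1, r ≤ 1 := by
    rintro r ⟨f, hs, hi, rfl⟩
    have h1 : varNorm f ≤ 1 := by unfold varNorm; rw [hs, hi]; norm_num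
    exact (lto_var_le hT f).trans h1
  have hS0bdd : BddAbove S0 := ⟨1, hS0ub⟩
  have hS1bdd : BddAbove S1 := ⟨1, hS1ub⟩
  have hS0nn : ∀ r ∈ S0, 0 ≤ r := by rintro r ⟨f, _, rfl⟩; exact varNorm_nonneg _
  have hS1nn : ∀ r ∈ S1, 0 ≤ r := by rintro r ⟨f, _, _, rfl⟩; exact varNorm_nonneg _
  have hS0ne : S0.Nonempty := ⟨varNorm (T 0), ⟨0, fun x => by norm_num, rfl⟩⟩
  constructor
  · -- sSup S0 = sSup S1
    rw [hcoeff]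
    apply le_antisymm
    · apply csSup_le hS0ne
      rintro r ⟨f, hf, rfl⟩
      set c := ⨅ x, f x with hc
      set d := ⨆ x, f x with hd
      have hc0 : 0 ≤ c := le_ciInf fun x => (hf x).1
      have hd1 : d ≤ 1 := ciSup_le fun x => (hf x).2
      have hcd : c ≤ d := (aux_inf_le f x0).trans (aux_le_sup f x0)
      rcases eq_or_lt_of_le hcd with h | h
      · -- constant case : varNorm (T f) = 0
        have h1 : varNorm f = 0 := by unfold varNorm; rw [← hc, ← hd, ← h]; ring
        have h2 : varNorm (T f) ≤ 0 := (lto_var_le hT f).trans_eq h1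
        have h3 : varNorm (T f) = 0 := le_antisymm h2 (varNorm_nonneg _)
        rw [h3]
        exact Real.sSup_nonneg hS1nn
      · -- rescale f to g with sup 1, inf 0
        set g : X → ℝ := (d - c)⁻¹ • (f + fun _ => -c) with hg
        have hdc : 0 < d - c := by linarith
        have hdcinv : (0:ℝ) ≤ (d - c)⁻¹ := le_of_lt (inv_pos.mpr hdc)
        have hsupg : (⨆ x, g x) = 1 := by
          have : (⨆ x, g x) = (d - c)⁻¹ * ⨆ x, (f x + -c) := by
            simp only [hg, Pi.smul_apply, Pi.add_apply, smul_eq_mul]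
            rw [← Real.mul_iSup_of_nonneg hdcinv]
          rw [this, aux_sup_add, ← hd, show d + -c = d - c from by ring]
          exact inv_mul_cancel₀ (ne_of_gt hdc)
        have hinfg : (⨅ x, g x) = 0 := by
          have : (⨅ x, g x) = (d - c)⁻¹ * ⨅ x, (f x + -c) := by
            simp only [hg, Pi.smul_apply, Pi.add_apply, smul_eq_mul]
            rw [← Real.mul_iInf_of_nonneg hdcinv]
          rw [this, aux_inf_add, ← hc]
          ring
        have hvg : varNorm (T g) = (d - c)⁻¹ * varNorm (T f) := by
          rw [hg, lto_var_smul hT hdcinv, lto_var_shift hT]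
        have hmem : varNorm (T g) ∈ S1 := ⟨g, hsupg, hinfg, rfl⟩
        have hle : varNorm (T f) ≤ varNorm (T g) := by
          rw [hvg]
          have h0 : 0 ≤ varNorm (T f) := varNorm_nonneg _
          rw [← one_mul (varNorm (T f))]
          calc 1 * varNorm (T f) ≤ (d - c)⁻¹ * varNorm (T f) := by
                apply mul_le_mul_of_nonneg_right _ h0
                rw [le_inv_comm₀ one_pos hdc]
                · linarith
            _ = (d - c)⁻¹ * (1 * varNorm (T f)) := by ring
        exact hle.trans (le_csSup hS1bdd hmem)
    · by_cases hne : S1.Nonempty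
      · apply csSup_le hne
        rintro r ⟨f, hs, hi, rfl⟩
        have hmem : varNorm (T f) ∈ S0 := by
          refine ⟨f, fun x => ⟨?_, ?_⟩, rfl⟩
          · rw [← hi]; exact aux_inf_le f x
          · rw [← hs]; exact aux_le_sup f x
        exact le_csSup hS0bdd hmem
      · rw [Set.not_nonempty_iff_eq_empty.mp hne, Real.sSup_empty]
        exact Real.sSup_nonneg hS0nn
  · -- sSup S0 = sSup S2 : the sets are equal
    rw [hcoeff]
    have hset : S0 = S2 := by
      ext r
      constructor
      · rintro ⟨f, hf, rfl⟩
        refine ⟨(2:ℝ) • f + fun _ => (-1:ℝ), fun x => ?_, ?_⟩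
        · have := hf x
          constructor <;> simp only [Pi.add_apply, Pi.smul_apply, smul_eq_mul] <;> linarith [this.1, this.2]
        · have h1 : varNorm (T ((2:ℝ) • f + fun _ => (-1:ℝ))) = 2 * varNorm (T f) := by
            rw [lto_var_shift hT, lto_var_smul hT (by norm_num : (0:ℝ) ≤ 2)]
          have h2 : centNorm (T ((2:ℝ) • f + fun _ => (-1:ℝ)))
              = varNorm (T ((2:ℝ) • f + fun _ => (-1:ℝ))) / 2 := rfl
          rw [h2, h1]; ring
      · rintro ⟨f, hf, rfl⟩
        refine ⟨(2:ℝ)⁻¹ • (f + fun _ => (1:ℝ)), fun x => ?_, ?_⟩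
        · have := hf x
          constructor <;> simp only [Pi.add_apply, Pi.smul_apply, smul_eq_mul] <;> linarith [this.1, this.2]
        · have h1 : varNorm (T ((2:ℝ)⁻¹ • (f + fun _ => (1:ℝ)))) = (2:ℝ)⁻¹ * varNorm (T f) := by
            rw [lto_var_smul hT (by norm_num : (0:ℝ) ≤ (2:ℝ)⁻¹), lto_var_shift hT]
          have h2 : centNorm (T f) = varNorm (T f) / 2 := rfl
          rw [h1, h2]; ring
    rw [hset]
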